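/- Let Y be the Moore–Penrose pseudoinverse of X, and let b_1,...,b_r be orthonormal vectors in ℝ^n with B b_j = β_j b_j and β_j ≠ 0 for each j. Set m_j := Yᵀ b_j and c_j := m_j/‖m_j‖₂ (each m_j is nonzero). Then the deflated data matrix X' := (I − Σ_{j=1}^{r} c_j c_jᵀ) X satisfies X'ᵀ X' = XᵀX − Σ_{j=1}^{r} β_j b_j b_jᵀ. -/

import Mathlib

open Matrix

section Aux

variable {p n q : ℕ}

private lemma aux_vecMulVec_mulVec (u : Fin p → ℝ) (v w : Fin n → ℝ) :
    (vecMulVec u v) *ᵥ w = (v ⬝ᵥ w) • u := by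
  ext i
  simp only [mulVec, dotProduct, vecMulVec_apply, Pi.smul_apply, smul_eq_mul]
  rw [Finset.sum_mul]
  exact Finset.sum_congr rfl fun j _ => by ring

private lemma aux_transpose_vecMulVec (u v : Fin n → ℝ) :
    (vecMulVec u v)ᵀ = vecMulVec v u := by
  ext i j; simp [vecMulVec_apply, mul_comm]

private lemma aux_mul_vecMulVec (M : Matrix (Fin n) (Fin p) ℝ) (u : Fin p → ℝ) (v : Fin q → ℝ) :
    M * vecMulVec u v = vecMulVec (M *ᵥ u) v := by
  ext i j
  simp only [mul_apply, vecMulVec_apply, mulVec, dotProduct]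
  rw [Finset.sum_mul]
  exact Finset.sum_congr rfl fun k _ => by ring

private lemma aux_vecMulVec_mul (u : Fin q → ℝ) (v : Fin p → ℝ) (N : Matrix (Fin p) (Fin n) ℝ) :
    vecMulVec u v * N = vecMulVec u (Nᵀ *ᵥ v) := by
  ext i j
  simp only [mul_apply, vecMulVec_apply, mulVec, dotProduct, transpose_apply]
  rw [Finset.mul_sum]
  exact Finset.sum_congr rfl fun k _ => by ring

private lemma aux_vecMulVec_mul_vecMulVec (a b c d : Fin p → ℝ) :
    vecMulVec a b * vecMulVec c d = (b ⬝ᵥ c) • vecMulVec a d := by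
  ext i j
  simp only [mul_apply, vecMulVec_apply, Matrix.smul_apply, smul_eq_mul, dotProduct]
  rw [Finset.sum_mul]
  exact Finset.sum_congr rfl fun k _ => by ring

private lemma aux_vecMulVec_smul (a a' : ℝ) (u : Fin p → ℝ) (v : Fin q → ℝ) :
    vecMulVec (a • u) (a' • v) = (a * a') • vecMulVec u v := by
  ext i j
  simp only [vecMulVec_apply, Pi.smul_apply, Matrix.smul_apply, smul_eq_mul]
  ring

private lemma aux_symm_dot (M : Matrix (Fin n) (Fin n) ℝ) (hM : Mᵀ = M) (u v : Fin n → ℝ) :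
    u ⬝ᵥ M *ᵥ v = M *ᵥ u ⬝ᵥ v := by
  rw [dotProduct_mulVec, ← mulVec_transpose, hM]

end Aux

/-- If `Y` is the Moore–Penrose pseudoinverse of `X` and `b 1, ..., b r`
are orthonormal eigenvectors of `B` with nonzero eigenvalues `β j`, then each
`m j := Yᵀ (b j)` is nonzero and the deflated matrix `X' := (I − ∑ c_j c_jᵀ) X`,
where `c j := m j/‖m j‖₂`, satisfies `X'ᵀ X' = XᵀX − ∑ β_j b_j b_jᵀ`. -/
theorem stmt10 {p n r : ℕ} (X : Matrix (Fin p) (Fin n) ℝ)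
    (e : Fin n → ℝ) (he : e = fun _ => (1 : ℝ))
    (d : Fin n → ℝ) (hd : d = (Xᵀ * X).mulVec e)
    (twoM : ℝ) (htwoM : twoM = e ⬝ᵥ (Xᵀ * X).mulVec e) (hm : twoM ≠ 0)
    (B : Matrix (Fin n) (Fin n) ℝ)
    (hB : B = Xᵀ * X - twoM⁻¹ • vecMulVec d d)
    (Y : Matrix (Fin n) (Fin p) ℝ)
    (hY₁ : X * Y * X = X) (hY₂ : Y * X * Y = Y)
    (hY₃ : (X * Y)ᵀ = X * Y) (hY₄ : (Y * X)ᵀ = Y * X)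
    (b : Fin r → Fin n → ℝ)
    (hortho : ∀ i j : Fin r, b i ⬝ᵥ b j = if i = j then 1 else 0)
    (β : Fin r → ℝ) (hβ : ∀ j : Fin r, β j ≠ 0)
    (heig : ∀ j : Fin r, B.mulVec (b j) = β j • b j)
    (m : Fin r → Fin p → ℝ) (hmdef : ∀ j : Fin r, m j = Yᵀ.mulVec (b j))
    (c : Fin r → Fin p → ℝ)
    (hc : ∀ j : Fin r, c j = (Real.sqrt (m j ⬝ᵥ m j))⁻¹ • m j)
    (X' : Matrix (Fin p) (Fin n) ℝ)
    (hX' : X' = (1 - ∑ j : Fin r, vecMulVec (c j) (c j)) * X) :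
    (∀ j : Fin r, m j ≠ 0) ∧
      X'ᵀ * X' = Xᵀ * X - ∑ j : Fin r, β j • vecMulVec (b j) (b j) := by
  set A : Matrix (Fin n) (Fin n) ℝ := Xᵀ * X with hA
  have hAsymm : Aᵀ = A := by rw [hA, transpose_mul, transpose_transpose]
  have hBsymm : Bᵀ = B := by
    rw [hB, transpose_sub, transpose_smul, hAsymm, aux_transpose_vecMulVec]
  have hXdot : ∀ u v : Fin n → ℝ, (X *ᵥ u) ⬝ᵥ (X *ᵥ v) = u ⬝ᵥ A *ᵥ v := by
    intro u v
    rw [dotProduct_mulVec, ← mulVec_transpose, mulVec_mulVec, ← hA,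
      ← aux_symm_dot A hAsymm]
  have hde : d ⬝ᵥ e = twoM := by rw [htwoM, hd, dotProduct_comm]
  have hBe : B *ᵥ e = 0 := by
    rw [hB, sub_mulVec, smul_mulVec, aux_vecMulVec_mulVec, hde, ← hd,
      smul_smul, inv_mul_cancel₀ hm, one_smul, sub_self]
  have heb : ∀ k, e ⬝ᵥ b k = 0 := by
    intro k
    have h1 : e ⬝ᵥ B *ᵥ b k = 0 := by
      rw [aux_symm_dot B hBsymm, hBe, zero_dotProduct]
    rw [heig k, dotProduct_smul, smul_eq_mul] at h1
    exact (mul_eq_zero.mp h1).resolve_left (hβ k)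
  have key : ∀ j, B *ᵥ b j = A *ᵥ (b j - (twoM⁻¹ * (d ⬝ᵥ b j)) • e) := by
    intro j
    rw [mulVec_sub, mulVec_smul, ← hd, hB, sub_mulVec, smul_mulVec,
      aux_vecMulVec_mulVec, smul_smul]
  have hYA : ∀ v : Fin n → ℝ, Yᵀ *ᵥ (A *ᵥ v) = X *ᵥ v := by
    intro v
    have hYX : Yᵀ * A = X := by
      rw [hA, ← Matrix.mul_assoc, ← transpose_mul, hY₃, hY₁]
    rw [mulVec_mulVec, hYX]
  have hmw : ∀ j, m j = (β j)⁻¹ • (X *ᵥ (b j - (twoM⁻¹ * (d ⬝ᵥ b j)) • e)) := by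
    intro j
    have hbj : b j = (β j)⁻¹ • (B *ᵥ b j) := by
      rw [heig, smul_smul, inv_mul_cancel₀ (hβ j), one_smul]
    calc m j = Yᵀ *ᵥ b j := hmdef j
      _ = Yᵀ *ᵥ ((β j)⁻¹ • (B *ᵥ b j)) := by rw [← hbj]
      _ = (β j)⁻¹ • (Yᵀ *ᵥ (A *ᵥ (b j - (twoM⁻¹ * (d ⬝ᵥ b j)) • e))) := by
          rw [key, mulVec_smul]
      _ = (β j)⁻¹ • (X *ᵥ (b j - (twoM⁻¹ * (d ⬝ᵥ b j)) • e)) := by rw [hYA]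
  have hXm : ∀ j, Xᵀ *ᵥ m j = b j := by
    intro j
    rw [hmw j, mulVec_smul, mulVec_mulVec, ← hA, ← key, heig, smul_smul,
      inv_mul_cancel₀ (hβ j), one_smul]
  have hdotm : ∀ j k, m j ⬝ᵥ m k = (β j)⁻¹ * (if j = k then 1 else 0) := by
    intro j k
    rw [hmw j, hmw k, smul_dotProduct, dotProduct_smul, hXdot, ← key k, heig k,
      dotProduct_smul, sub_dotProduct, smul_dotProduct, heb k, hortho j k]
    simp only [smul_eq_mul, mul_zero, sub_zero]
    rw [inv_mul_cancel_left₀ (hβ k)]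
  have hmm : ∀ j, m j ⬝ᵥ m j = (β j)⁻¹ := by
    intro j; rw [hdotm j j, if_pos rfl, mul_one]
  have hmne : ∀ j, m j ≠ 0 := by
    intro j h
    have h2 := hmm j
    rw [h, zero_dotProduct] at h2
    exact hβ j (inv_eq_zero.mp h2.symm)
  have hβpos : ∀ j, 0 < β j := by
    intro j
    have h1 : (0:ℝ) ≤ m j ⬝ᵥ m j := Finset.sum_nonneg fun i _ => mul_self_nonneg _
    rw [hmm j] at h1
    exact inv_pos.mp (lt_of_le_of_ne h1 (Ne.symm (inv_ne_zero (hβ j))))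
  have hcm : ∀ j, c j = Real.sqrt (β j) • m j := by
    intro j; rw [hc, hmm, Real.sqrt_inv, inv_inv]
  have hXc : ∀ j, Xᵀ *ᵥ c j = Real.sqrt (β j) • b j := by
    intro j; rw [hcm, mulVec_smul, hXm]
  have hcc : ∀ j k, c j ⬝ᵥ c k = if j = k then 1 else 0 := by
    intro j k
    rw [hcm, hcm, smul_dotProduct, dotProduct_smul, hdotm]
    by_cases h : j = k
    · subst h
      have hif : (if j = j then (1:ℝ) else 0) = 1 := if_pos rfl
      rw [hif, smul_eq_mul, smul_eq_mul, mul_one, ← mul_assoc,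
        Real.mul_self_sqrt (hβpos j).le, mul_inv_cancel₀ (hβ j)]
    · simp [h]
  refine ⟨hmne, ?_⟩
  set P : Matrix (Fin p) (Fin p) ℝ := ∑ j : Fin r, vecMulVec (c j) (c j) with hP
  have hPt : Pᵀ = P := by
    rw [hP, transpose_sum]
    exact Finset.sum_congr rfl fun j _ => aux_transpose_vecMulVec _ _
  have hPP : P * P = P := by
    rw [hP, Finset.sum_mul_sum]
    refine Finset.sum_congr rfl fun j _ => ?_
    calc (∑ k : Fin r, vecMulVec (c j) (c j) * vecMulVec (c k) (c k))
        = ∑ k : Fin r, (if j = k then (1:ℝ) else 0) • vecMulVec (c j) (c k) :=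
          Finset.sum_congr rfl fun k _ => by rw [aux_vecMulVec_mul_vecMulVec, hcc]
      _ = vecMulVec (c j) (c j) := by
          simp only [ite_smul, one_smul, zero_smul, Finset.sum_ite_eq,
            Finset.mem_univ, if_true]
  have h1 : (1 - P) * (1 - P) = 1 - P := by
    rw [sub_mul, one_mul, mul_sub, mul_one, hPP, sub_self, sub_zero]
  have hXPX : Xᵀ * P * X = ∑ j : Fin r, β j • vecMulVec (b j) (b j) := by
    rw [hP, Matrix.mul_sum, Matrix.sum_mul]
    refine Finset.sum_congr rfl fun j _ => ?_
    rw [aux_mul_vecMulVec, aux_vecMulVec_mul, hXc, aux_vecMulVec_smul,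
      Real.mul_self_sqrt (hβpos j).le]
  rw [hX', transpose_mul, transpose_sub, transpose_one, hPt,
    Matrix.mul_assoc, ← Matrix.mul_assoc (1 - P) (1 - P) X, h1,
    Matrix.sub_mul, Matrix.one_mul, Matrix.mul_sub, ← Matrix.mul_assoc, ← hA, hXPX]
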